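/- arXiv:2203.08666 — 5 statements merged into one kernel-verified Lean document; each statement's English description precedes it below -/
import Mathlib

section
/- If a 2-dimensional sphere of radius r > 1/2 in ℝ³ is colored with finitely many colors such that no two points at Euclidean distance 1 receive the same color, then at least 3 colors are used. -/
/-
If only two colours occurred, two points of the sphere with a common unit-distance neighbour
would have the same colour. Put `P i` on the equator at longitude `2 i δ` and `Q i` at latitude
`α`, longitude `(2 i + 1) δ`, where `cos α cos δ = t := 1 - 1 / (2 r²)`: then `P i Q i` and
`Q i P (i + 1)` are unit chords, so all `P i` share a colour. Choosing `2 m δ = arccos t` makes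
`P m P 0` a unit chord too, a contradiction. `r > 1/2` is exactly what makes `-1 < t < 1`.
-/

open Real
open scoped RealInnerProductSpace

noncomputable def sphericalPoint (r α φ : ℝ) : EuclideanSpace ℝ (Fin 3) :=
  !₂[r * cos α * cos φ, r * cos α * sin φ, r * sin α]

theorem inner_sphericalPoint (r α φ β ψ : ℝ) :
    ⟪sphericalPoint r α φ, sphericalPoint r β ψ⟫ =
      r ^ 2 * (cos α * cos β * cos (φ - ψ) + sin α * sin β) := by
  simp [sphericalPoint, PiLp.inner_apply, Fin.sum_univ_three, cos_sub]
  ring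

theorem norm_sphericalPoint {r : ℝ} (hr : 0 ≤ r) (α φ : ℝ) :
    ‖sphericalPoint r α φ‖ = r := by
  have h : ‖sphericalPoint r α φ‖ ^ 2 = r ^ 2 := by
    rw [← real_inner_self_eq_norm_sq, inner_sphericalPoint, sub_self, cos_zero]
    linear_combination r ^ 2 * sin_sq_add_cos_sq α
  exact (pow_left_inj₀ (norm_nonneg _) hr two_ne_zero).1 h

theorem dist_eq_one_of_inner {F : Type*} [NormedAddCommGroup F] [InnerProductSpace ℝ F]
    {x y : F} {r : ℝ} (hx : ‖x‖ = r) (hy : ‖y‖ = r) (h : ⟪x, y⟫ = r ^ 2 - 1 / 2) :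
    dist x y = 1 := by
  have h : dist x y ^ 2 = 1 ^ 2 := by
    rw [dist_eq_norm, norm_sub_sq_real, hx, hy, h]; ring
  exact (pow_left_inj₀ dist_nonneg zero_le_one two_ne_zero).1 h

theorem color_eq_of_common_neighbors {α β : Type*} {S : Set α} {R : α → α → Prop} {c : α → β}
    (hc : ∀ x ∈ S, ∀ y ∈ S, R x y → c x ≠ c y)
    (h3 : ∀ x ∈ S, ∀ y ∈ S, ∀ z ∈ S, c x ≠ c y → c y ≠ c z → c x = c z)
    {P Q : ℕ → α} (hP : ∀ i, P i ∈ S) (hQ : ∀ i, Q i ∈ S)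
    (hPQ : ∀ i, R (P i) (Q i)) (hQP : ∀ i, R (Q i) (P (i + 1))) (i : ℕ) :
    c (P i) = c (P 0) := by
  induction i with
  | zero => rfl
  | succ i ih =>
    rw [← ih]
    exact (h3 _ (hP i) _ (hQ i) _ (hP (i + 1)) (hc _ (hP i) _ (hQ i) (hPQ i))
      (hc _ (hQ i) _ (hP (i + 1)) (hQP i))).symm

theorem exists_angles_cos_eq {t : ℝ} (ht₀ : -1 < t) (ht₁ : t < 1) :
    ∃ (m : ℕ) (δ α : ℝ), cos (2 * m * δ) = t ∧ cos α * cos δ = t := by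
  set θ := arccos t
  have hθ₀ : 0 < θ := arccos_pos.2 ht₁
  have hθπ : θ < π := arccos_lt_pi.2 ht₀
  obtain ⟨m, hm⟩ := exists_nat_gt (θ / (π - θ))
  have hm₁ : (1 : ℝ) ≤ m :=
    Nat.one_le_cast.2 (Nat.cast_pos.1 ((div_pos hθ₀ (sub_pos.2 hθπ)).trans hm))
  set δ := θ / (2 * m)
  have hmδ : 2 * m * δ = θ := mul_div_cancel₀ θ (by positivity)
  have hδ₀ : 0 < δ := by positivity
  have hδθ : δ ≤ θ := by nlinarith
  have hδπθ : δ < π - θ := by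
    rw [div_lt_iff₀ (sub_pos.2 hθπ)] at hm
    nlinarith
  have hcos_ge : t ≤ cos δ := by
    simpa [θ, cos_arccos ht₀.le ht₁.le] using
      cos_le_cos_of_nonneg_of_le_pi hδ₀.le hθπ.le hδθ
  have hcos_ge' : -t ≤ cos δ := by
    simpa [θ, cos_arccos ht₀.le ht₁.le] using
      cos_le_cos_of_nonneg_of_le_pi hδ₀.le (sub_le_self π hθ₀.le) hδπθ.le
  have hcos_pos : 0 < cos δ := cos_pos_of_mem_Ioo ⟨by linarith, by linarith⟩
  have hu : |t / cos δ| ≤ 1 := by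
    rw [abs_div, abs_of_pos hcos_pos, div_le_one hcos_pos, abs_le]
    constructor <;> linarith
  refine ⟨m, δ, arccos (t / cos δ), ?_, ?_⟩
  · rw [hmδ, cos_arccos ht₀.le ht₁.le]
  · rw [cos_arccos (abs_le.1 hu).1 (abs_le.1 hu).2, div_mul_cancel₀ t hcos_pos.ne']

theorem stmt_0 (r : ℝ) (hr : 1/2 < r) (n : ℕ)
    (c : EuclideanSpace ℝ (Fin 3) → Fin n)
    (hc : ∀ x ∈ Metric.sphere (0 : EuclideanSpace ℝ (Fin 3)) r,
          ∀ y ∈ Metric.sphere (0 : EuclideanSpace ℝ (Fin 3)) r,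
          dist x y = 1 → c x ≠ c y) :
    ∃ x ∈ Metric.sphere (0 : EuclideanSpace ℝ (Fin 3)) r,
    ∃ y ∈ Metric.sphere (0 : EuclideanSpace ℝ (Fin 3)) r,
    ∃ z ∈ Metric.sphere (0 : EuclideanSpace ℝ (Fin 3)) r,
      c x ≠ c y ∧ c y ≠ c z ∧ c x ≠ c z := by
  by_contra! h3
  have hr₀ : 0 < r := by linarith
  set t := 1 - 1 / (2 * r ^ 2)
  have hrt : r ^ 2 * t = r ^ 2 - 1 / 2 := by simp only [t]; field_simp
  have ht₀ : -1 < t := by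
    have : 1 / (2 * r ^ 2) < 2 := by rw [div_lt_iff₀ (by positivity)]; nlinarith
    linarith
  have ht₁ : t < 1 := by
    have : 0 < 1 / (2 * r ^ 2) := by positivity
    linarith
  obtain ⟨m, δ, α, hm, hα⟩ := exists_angles_cos_eq ht₀ ht₁
  have hmem (β φ : ℝ) : sphericalPoint r β φ ∈ Metric.sphere 0 r := by
    rw [mem_sphere_zero_iff_norm]; exact norm_sphericalPoint hr₀.le β φ
  have hunit {β φ γ ψ : ℝ} (h : cos β * cos γ * cos (φ - ψ) + sin β * sin γ = t) :
      dist (sphericalPoint r β φ) (sphericalPoint r γ ψ) = 1 :=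
    dist_eq_one_of_inner (norm_sphericalPoint hr₀.le β φ) (norm_sphericalPoint hr₀.le γ ψ)
      (by rw [inner_sphericalPoint, h, hrt])
  have hchain := color_eq_of_common_neighbors hc h3
    (P := fun i : ℕ ↦ sphericalPoint r 0 (2 * i * δ))
    (Q := fun i : ℕ ↦ sphericalPoint r α ((2 * i + 1) * δ))
    (fun _ ↦ hmem _ _) (fun _ ↦ hmem _ _)
    (fun i ↦ hunit (by
      rw [show 2 * (i : ℝ) * δ - (2 * i + 1) * δ = -δ by ring]; simp [hα]))
    (fun i ↦ hunit (by
      rw [show (2 * (i : ℝ) + 1) * δ - 2 * ((i + 1 : ℕ) : ℝ) * δ = -δ by push_cast; ring]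
      simp [hα]))
    m
  exact hc _ (hmem _ _) _ (hmem _ _) (hunit (by simp [hm])) hchain
end

section
/- For every radius r > 1/2, there exists a radius r₁ with 1/2 < r₁ < r such that the circle of radius r₁ contains an odd cycle in the unit distance graph, i.e., there exist an odd number m ≥ 3 of points on a circle of radius r₁ that are consecutively at unit distance apart, closing up into a cycle. -/
set_option maxHeartbeats 1000000

open Real

private lemma norm_two' (x y : ℝ) :
    ‖(WithLp.equiv 2 (Fin 2 → ℝ)).symm ![x, y]‖ = Real.sqrt (x^2 + y^2) := by
  rw [EuclideanSpace.norm_eq]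
  simp [Fin.sum_univ_two, Real.norm_eq_abs, sq_abs]

private lemma dist_two' (x y z w : ℝ) :
    dist ((WithLp.equiv 2 (Fin 2 → ℝ)).symm ![x, y])
      ((WithLp.equiv 2 (Fin 2 → ℝ)).symm ![z, w]) = Real.sqrt ((x-z)^2 + (y-w)^2) := by
  rw [EuclideanSpace.dist_eq]
  simp [Fin.sum_univ_two, Real.dist_eq, sq_abs]

theorem stmt_1 (r : ℝ) (hr : 1/2 < r) :
    ∃ r₁ : ℝ, 1/2 < r₁ ∧ r₁ < r ∧
    ∃ m : ℕ, 3 ≤ m ∧ Odd m ∧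
    ∃ p : ZMod m → EuclideanSpace ℝ (Fin 2),
      (∀ i, ‖p i‖ = r₁) ∧ (∀ i, dist (p i) (p (i + 1)) = 1) := by
  have hr0 : (0:ℝ) < r := by linarith
  have hr2 : (0:ℝ) < r^2 := by positivity
  have hδpos : (0:ℝ) < 4 - 1/r^2 := by
    have : 1/r^2 < 4 := by
      rw [div_lt_iff₀ hr2]; nlinarith
    linarith
  set δ := Real.sqrt (4 - 1/r^2) with hδdef
  have hδ0 : 0 < δ := Real.sqrt_pos.mpr hδpos
  have hδsq : δ^2 = 4 - 1/r^2 := Real.sq_sqrt hδpos.le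
  obtain ⟨n, hn⟩ := exists_nat_gt (π / δ)
  set m : ℕ := 2*n+3 with hmdef
  have hm3 : 3 ≤ m := by omega
  have hmR : (0:ℝ) < (m:ℝ) := by positivity
  have hπm0 : 0 < π / m := div_pos Real.pi_pos hmR
  have hπmδ : π / m < δ := by
    have h1 : π / δ < (m:ℝ) := lt_of_lt_of_le hn (by exact_mod_cast Nat.le_of_lt (by omega))
    rw [div_lt_iff₀ hδ0] at h1
    rw [div_lt_iff₀ hmR]
    linarith
  have hm1 : (1:ℝ) ≤ (m:ℝ) := by exact_mod_cast (by omega : 1 ≤ m)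
  have hπmπ : π / m ≤ π := by
    rw [div_le_iff₀ hmR]
    nlinarith [Real.pi_pos, hm1]
  -- cosine bounds
  have hc1 : 1/(2*r^2) - 1 < Real.cos (π/m) := by
    have h1 : 1 - (π/m)^2/2 ≤ Real.cos (π/m) := Real.one_sub_sq_div_two_le_cos
    have h2 : (π/m)^2 < δ^2 := by nlinarith
    rw [hδsq] at h2
    have : 1/(2*r^2) = (1/r^2)/2 := by ring
    rw [this]; linarith
  have hclt1 : Real.cos (π/m) < 1 := by
    have := Real.cos_lt_cos_of_nonneg_of_le_pi le_rfl hπmπ hπm0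
    simpa using this
  set θ := π - π/m with hθdef
  have hcosθ : Real.cos θ = - Real.cos (π/m) := Real.cos_pi_sub _
  have hcos_lt : Real.cos θ < 1 - 1/(2*r^2) := by rw [hcosθ]; linarith
  have hcos_gt : -1 < Real.cos θ := by rw [hcosθ]; linarith
  have hhalf : (0:ℝ) < 1/(2*r^2) := by positivity
  have h1c : 0 < 1 - Real.cos θ := by nlinarith
  have h1c4 : 2*(1 - Real.cos θ) < 4 := by linarith
  have h1cr : 1/r^2 < 2*(1 - Real.cos θ) := by
    have : 1/r^2 = 2 * (1/(2*r^2)) := by ring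
    rw [this]; linarith
  set s := Real.sqrt (2*(1 - Real.cos θ)) with hsdef
  have hs0 : 0 < s := Real.sqrt_pos.mpr (by linarith)
  have hssq : s^2 = 2*(1 - Real.cos θ) := Real.sq_sqrt (by linarith)
  have hs2 : s < 2 := by
    rw [hsdef, Real.sqrt_lt' (by norm_num : (0:ℝ) < 2)]
    norm_num
    linarith
  have hsr : 1/r < s := by
    rw [hsdef, Real.lt_sqrt (by positivity : (0:ℝ) ≤ 1/r)]
    calc (1/r)^2 = 1/r^2 := by ring
      _ < _ := h1cr
  refine ⟨1/s, ?_, ?_, m, hm3, ⟨n+1, by omega⟩, ?_⟩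
  · rw [lt_div_iff₀ hs0]; linarith
  · rw [div_lt_iff₀ hs0]
    rw [div_lt_iff₀ hr0] at hsr
    linarith
  haveI : NeZero m := ⟨by omega⟩
  haveI : Fact (1 < m) := ⟨by omega⟩
  set r₁ := 1/s with hr₁def
  have hkey : 2 * r₁^2 * (1 - Real.cos θ) = 1 := by
    rw [hr₁def]
    field_simp
    nlinarith [hssq]
  refine ⟨fun i => (WithLp.equiv 2 (Fin 2 → ℝ)).symm
      ![r₁ * Real.cos (θ * i.val), r₁ * Real.sin (θ * i.val)], ?_, ?_⟩
  · intro i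
    rw [norm_two']
    have : (r₁ * Real.cos (θ * i.val))^2 + (r₁ * Real.sin (θ * i.val))^2 = r₁^2 := by
      nlinarith [Real.sin_sq_add_cos_sq (θ * i.val)]
    rw [this]
    rw [Real.sqrt_sq (by positivity)]
  · intro i
    rw [dist_two']
    set a := θ * i.val with hadef
    set b := θ * ((i+1 : ZMod m)).val with hbdef
    have hcosab : Real.cos (a - b) = Real.cos θ := by
      -- (i+1).val = (i.val + 1) % m
      have hval : ((i+1 : ZMod m)).val = (i.val + 1) % m := by
        rw [ZMod.val_add, ZMod.val_one]
      set q := (i.val + 1) / m with hq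
      have hmod : (i.val + 1) % m + m * q = i.val + 1 := Nat.mod_add_div _ _
      have hbR : (((i+1 : ZMod m)).val : ℝ) = (i.val : ℝ) + 1 - m * q := by
        rw [hval]
        have : (((i.val + 1) % m : ℕ) : ℝ) + (m:ℝ) * q = (i.val:ℝ) + 1 := by
          exact_mod_cast congrArg (fun t : ℕ => (t:ℝ)) hmod
        linarith
      have hθm : θ * m = (n+1 : ℕ) * (2*π) := by
        rw [hθdef]
        field_simp
        push_cast [hmdef]
        ring
      have hab : a - b = -θ + ((n+1)*q : ℕ) * (2*π) := by
        rw [hadef, hbdef, hbR]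
        push_cast at hθm ⊢
        linear_combination (q:ℝ) * hθm
      rw [hab]
      rw [show ((((n+1)*q : ℕ)) : ℝ) * (2*π) = (((n+1)*q : ℕ) : ℤ) * (2*π) by push_cast; ring]
      rw [Real.cos_add_int_mul_two_pi]
      exact Real.cos_neg θ
    have hexp : (r₁ * Real.cos a - r₁ * Real.cos b)^2 + (r₁ * Real.sin a - r₁ * Real.sin b)^2
        = 2 * r₁^2 * (1 - Real.cos (a - b)) := by
      rw [Real.cos_sub]
      nlinarith [Real.sin_sq_add_cos_sq a, Real.sin_sq_add_cos_sq b]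
    rw [hexp, hcosab, hkey, Real.sqrt_one]
end

section
/- If 1/2 < r < √3/3 and x, z ∈ S²(r) with 0 < ‖x − z‖ < √(4r² − 1), then there exist two distinct points y₁ ≠ y₂ in S²(r) with ‖y_i − x‖ = ‖y_i − z‖ = 1. -/
open RealInnerProductSpace

theorem stmt_10 (r : ℝ) (hr : 1/2 < r) (hr' : r < Real.sqrt 3 / 3)
    (x z : EuclideanSpace ℝ (Fin 3)) (hx : ‖x‖ = r) (hz : ‖z‖ = r)
    (hxz0 : 0 < ‖x - z‖) (hxz : ‖x - z‖ < Real.sqrt (4 * r ^ 2 - 1)) :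
    ∃ y₁ y₂ : EuclideanSpace ℝ (Fin 3), y₁ ≠ y₂ ∧
      ‖y₁‖ = r ∧ ‖y₂‖ = r ∧
      ‖y₁ - x‖ = 1 ∧ ‖y₁ - z‖ = 1 ∧ ‖y₂ - x‖ = 1 ∧ ‖y₂ - z‖ = 1 := by
  classical
  have hr1 : r < 1 := by
    have h3 : Real.sqrt 3 < 3 := by
      nlinarith [Real.sq_sqrt (by norm_num : (3:ℝ) ≥ 0), Real.sqrt_nonneg 3]
    linarith
  have hd2 : ‖x - z‖ ^ 2 < 4 * r ^ 2 - 1 :=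
    (Real.lt_sqrt hxz0.le).mp hxz
  -- exists unit vector orthogonal to x and z
  obtain ⟨w, hwx, hwz, hw1⟩ : ∃ w : EuclideanSpace ℝ (Fin 3),
      ⟪x, w⟫ = 0 ∧ ⟪z, w⟫ = 0 ∧ ‖w‖ = 1 := by
    set K : Submodule ℝ (EuclideanSpace ℝ (Fin 3)) := Submodule.span ℝ {x, z}
    have hK : Module.finrank ℝ K ≤ 2 := by
      have := finrank_span_le_card (R := ℝ) ({x, z} : Set (EuclideanSpace ℝ (Fin 3)))
      refine this.trans ?_
      rw [Set.toFinset_insert, Set.toFinset_singleton]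
      exact (Finset.card_insert_le _ _).trans (by simp)
    have hne : Kᗮ ≠ ⊥ := by
      intro h
      have hT : K = ⊤ := Submodule.orthogonal_eq_bot_iff.mp h
      have : Module.finrank ℝ K = 3 := by
        rw [hT]; simp [finrank_euclideanSpace_fin]
      omega
    obtain ⟨w₀, hw₀K, hw₀⟩ := Submodule.exists_mem_ne_zero_of_ne_bot hne
    have hnorm : ‖w₀‖ ≠ 0 := norm_ne_zero_iff.mpr hw₀
    refine ⟨‖w₀‖⁻¹ • w₀, ?_, ?_, ?_⟩
    · have := (Submodule.mem_orthogonal K w₀).mp hw₀K x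
        (Submodule.subset_span (by simp))
      rw [real_inner_smul_right, this]; ring
    · have := (Submodule.mem_orthogonal K w₀).mp hw₀K z
        (Submodule.subset_span (by simp))
      rw [real_inner_smul_right, this]; ring
    · simp [norm_smul, hnorm, inv_mul_cancel₀ hnorm]
  set c : ℝ := r ^ 2 - 1/2 with hc
  set A : ℝ := r ^ 2 + ⟪x, z⟫ with hA
  have hp : ‖x - z‖ ^ 2 = 2 * r ^ 2 - 2 * ⟪x, z⟫ := by
    rw [norm_sub_sq_real, hx, hz]; ring
  have hApos : 0 < A := by nlinarith [hxz0, sq_nonneg (‖x - z‖)]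
  have hAval : A = (4 * r ^ 2 - ‖x - z‖ ^ 2) / 2 := by rw [hA]; linarith
  have hkey : 2 * c ^ 2 < r ^ 2 * A := by
    have hd0 : 0 < ‖x - z‖ ^ 2 := by positivity
    have hr2 : 0 < 1 - r ^ 2 := by nlinarith
    rw [hc, hAval]
    nlinarith [hd2, hd0, mul_pos hr2 hd0]
  set s : ℝ := c / A with hs
  set T : ℝ := r ^ 2 - 2 * c ^ 2 / A with hT
  have hTpos : 0 < T := by
    rw [hT, sub_pos, div_lt_iff₀ hApos]; linarith
  set t : ℝ := Real.sqrt T with ht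
  have htpos : 0 < t := Real.sqrt_pos.mpr hTpos
  have ht2 : t ^ 2 = T := Real.sq_sqrt hTpos.le
  have ht2' : t ^ 2 = r ^ 2 - 2 * c * s := by rw [ht2, hT, hs]; ring
  set y₁ : EuclideanSpace ℝ (Fin 3) := s • (x + z) + t • w with hy₁
  set y₂ : EuclideanSpace ℝ (Fin 3) := s • (x + z) - t • w with hy₂
  have hww : ⟪w, w⟫ = 1 := by
    rw [real_inner_self_eq_norm_sq, hw1]; norm_num
  have hxx : ⟪x, x⟫ = r ^ 2 := by rw [real_inner_self_eq_norm_sq, hx]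
  have hzz : ⟪z, z⟫ = r ^ 2 := by rw [real_inner_self_eq_norm_sq, hz]
  have hzx : ⟪z, x⟫ = ⟪x, z⟫ := real_inner_comm x z
  have hwx' : ⟪w, x⟫ = 0 := by rw [real_inner_comm]; exact hwx
  have hwz' : ⟪w, z⟫ = 0 := by rw [real_inner_comm]; exact hwz
  have hsA : s * (r ^ 2 + ⟪x, z⟫) = c := by
    rw [← hA, hs]; exact div_mul_cancel₀ c hApos.ne'
  have expand : ∀ ε : ℝ, ε ^ 2 = 1 →
      ⟪s • (x + z) + (ε * t) • w, x⟫ = c ∧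
      ⟪s • (x + z) + (ε * t) • w, z⟫ = c ∧
      ‖s • (x + z) + (ε * t) • w‖ = r := by
    intro ε hε2
    have h1 : ⟪s • (x + z) + (ε * t) • w, x⟫ = c := by
      simp only [inner_add_left, real_inner_smul_left, hxx, hzx, hwx']
      linear_combination hsA
    have h2 : ⟪s • (x + z) + (ε * t) • w, z⟫ = c := by
      simp only [inner_add_left, real_inner_smul_left, hzz, hwz']
      linear_combination hsA
    have hsq : ‖s • (x + z) + (ε * t) • w‖ ^ 2 = r ^ 2 := by
      rw [← real_inner_self_eq_norm_sq]
      simp only [inner_add_left, inner_add_right, real_inner_smul_left,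
        real_inner_smul_right, hxx, hzz, hzx, hwx', hwz', hwx, hwz, hww]
      linear_combination (2 * s) * hsA + (t ^ 2) * hε2 + ht2'
    refine ⟨h1, h2, ?_⟩
    calc ‖s • (x + z) + (ε * t) • w‖
        = Real.sqrt (‖s • (x + z) + (ε * t) • w‖ ^ 2) :=
          (Real.sqrt_sq (norm_nonneg _)).symm
      _ = Real.sqrt (r ^ 2) := by rw [hsq]
      _ = r := Real.sqrt_sq (by linarith)
  obtain ⟨h1x, h1z, h1n⟩ := expand 1 (by norm_num)
  obtain ⟨h2x, h2z, h2n⟩ := expand (-1) (by norm_num)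
  rw [one_mul] at h1x h1z h1n
  have hneg : ((-1 : ℝ) * t) • w = -(t • w) := by
    rw [neg_one_mul, neg_smul]
  rw [hneg] at h2x h2z h2n
  have hy₂eq : y₂ = s • (x + z) + -(t • w) := by rw [hy₂, sub_eq_add_neg]
  have dist1 : ∀ y : EuclideanSpace ℝ (Fin 3), ‖y‖ = r → ⟪y, x⟫ = c → ‖y - x‖ = 1 := by
    intro y hyn hyx
    have h : ‖y - x‖ ^ 2 = 1 := by
      rw [norm_sub_sq_real, hyn, hyx, hx, hc]; ring
    calc ‖y - x‖ = Real.sqrt (‖y - x‖ ^ 2) := (Real.sqrt_sq (norm_nonneg _)).symm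
      _ = 1 := by rw [h]; exact Real.sqrt_one
  have dist2 : ∀ y : EuclideanSpace ℝ (Fin 3), ‖y‖ = r → ⟪y, z⟫ = c → ‖y - z‖ = 1 := by
    intro y hyn hyz
    have h : ‖y - z‖ ^ 2 = 1 := by
      rw [norm_sub_sq_real, hyn, hyz, hz, hc]; ring
    calc ‖y - z‖ = Real.sqrt (‖y - z‖ ^ 2) := (Real.sqrt_sq (norm_nonneg _)).symm
      _ = 1 := by rw [h]; exact Real.sqrt_one
  refine ⟨y₁, y₂, ?_, h1n, hy₂eq ▸ h2n, dist1 y₁ h1n h1x,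
    dist2 y₁ h1n h1z, dist1 y₂ (hy₂eq ▸ h2n) (hy₂eq ▸ h2x),
    dist2 y₂ (hy₂eq ▸ h2n) (hy₂eq ▸ h2z)⟩
  intro h
  have hsub : y₁ - y₂ = (2 * t) • w := by rw [hy₁, hy₂]; module
  rw [h, sub_self] at hsub
  have hw0 : w ≠ 0 := by
    intro h0; rw [h0, norm_zero] at hw1; norm_num at hw1
  rcases smul_eq_zero.mp hsub.symm with h' | h'
  · linarith
  · exact hw0 h'
end

section
/- Consider the bipartite graph whose vertex set is the union of the closed balls B̄_ρ(x*) and B̄_ρ(−x*) on the sphere S²(r) (with ρ = √(4r² − 1), 1/2 < r < √3/3 and ρ < distance conditions ensuring the balls are disjoint), with edges between points at Euclidean distance 1. Then this graph is connected: any point of B̄_ρ(x*) is joined to some point adjacent also to x* (they share a common neighbor), and there is an edge between the two balls; consequently, a proper 2-coloring of this graph, if it exists, is unique up to swapping the colors. -/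
/-!
Two points `a, b` of the sphere with `‖a - b‖ ≤ ρ` have a common neighbour `q`: by the
parallelogram law `‖a + b‖ ≥ 1`, which is what lets a point `α (a + b) + β n`, with `n`
normal to `a` and `b`, lie on the sphere and satisfy `⟪q, a⟫ = ⟪q, b⟫ = r² - 1/2`. Again by the
parallelogram law, `‖q - p‖ = 1` on the sphere means `‖q + p‖ = ρ`, so a common neighbour of a
vertex `v` and the centre `±x` of its cap lies in the other cap. Hence every vertex is two steps
from `x` or `-x`, and any neighbour of `x` joins the two caps. On a connected graph, agreement of
two proper 2-colourings at one vertex propagates along edges.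
-/
open RealInnerProductSpace Module

section

variable {E : Type*} [NormedAddCommGroup E] [InnerProductSpace ℝ E]

theorem exists_ne_zero_inner_eq_zero_of_three_le_finrank (hE : 3 ≤ finrank ℝ E) (a b : E) :
    ∃ n ≠ 0, ⟪a, n⟫ = 0 ∧ ⟪b, n⟫ = 0 := by
  have : FiniteDimensional ℝ E := Module.finite_of_finrank_pos (by omega)
  classical
  set K := Submodule.span ℝ (({a, b} : Finset E) : Set E)
  have hK : K ≠ ⊤ := by
    intro h
    have : finrank ℝ K ≤ 2 := (finrank_span_finset_le_card _).trans Finset.card_le_two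
    rw [h, finrank_top] at this
    omega
  obtain ⟨n, hn, hn0⟩ := Submodule.exists_mem_ne_zero_of_ne_bot
    (mt Submodule.orthogonal_eq_bot_iff.mp hK)
  exact ⟨n, hn0, Submodule.inner_right_of_mem_orthogonal (Submodule.subset_span (by simp)) hn,
    Submodule.inner_right_of_mem_orthogonal (Submodule.subset_span (by simp)) hn⟩

theorem exists_norm_add_smul_eq {u n : E} (hn : n ≠ 0) (hun : ⟪u, n⟫ = 0) {R : ℝ}
    (hu : ‖u‖ ≤ R) : ∃ β : ℝ, ‖u + β • n‖ = R := by
  have hn' : 0 < ‖n‖ := norm_pos_iff.mpr hn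
  refine ⟨√(R ^ 2 - ‖u‖ ^ 2) / ‖n‖, ?_⟩
  have hR : 0 ≤ R := (norm_nonneg u).trans hu
  have hsq : 0 ≤ R ^ 2 - ‖u‖ ^ 2 := by nlinarith [norm_nonneg u]
  have key := norm_add_sq_eq_norm_sq_add_norm_sq_real
    (x := u) (y := (√(R ^ 2 - ‖u‖ ^ 2) / ‖n‖) • n) (by rw [real_inner_smul_right, hun, mul_zero])
  rw [norm_smul, Real.norm_of_nonneg (by positivity), div_mul_cancel₀ _ hn'.ne',
    Real.mul_self_sqrt hsq] at key
  rw [← Real.sqrt_mul_self (norm_nonneg _), key, ← sq, add_sub_cancel, Real.sqrt_sq hR]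

theorem inner_add_left_eq_half_norm_sq {a b : E} (hab : ‖a‖ = ‖b‖) :
    ⟪a + b, a⟫ = ‖a + b‖ ^ 2 / 2 := by
  rw [inner_add_left, real_inner_self_eq_norm_sq, norm_add_sq_real, hab, real_inner_comm]
  ring

theorem exists_norm_eq_inner_eq_inner_eq (hE : 3 ≤ finrank ℝ E) {a b : E} (hab : ‖a‖ = ‖b‖)
    {R τ : ℝ} (hR : 0 ≤ R) (hτ : 2 * |τ| ≤ R * ‖a + b‖) :
    ∃ q : E, ‖q‖ = R ∧ ⟪q, a⟫ = τ ∧ ⟪q, b⟫ = τ := by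
  obtain ⟨n, hn, hna, hnb⟩ := exists_ne_zero_inner_eq_zero_of_three_le_finrank hE a b
  -- If `a + b = 0` then `τ = 0`, and the junk value `α = 0` still works.
  set α := 2 * τ / ‖a + b‖ ^ 2
  have hα : α * (‖a + b‖ ^ 2 / 2) = τ ∧ ‖α • (a + b)‖ ≤ R := by
    rcases (norm_nonneg (a + b)).eq_or_lt with h0 | h0
    · have hτ0 : τ = 0 := abs_nonpos_iff.mp (by rw [← h0, mul_zero] at hτ; linarith)
      simp [α, ← h0, hτ0, hR]
    · refine ⟨by simp only [α]; field_simp, ?_⟩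
      rw [norm_smul, Real.norm_eq_abs, abs_div, abs_mul, abs_two, abs_of_pos (pow_pos h0 2),
        div_mul_eq_mul_div, div_le_iff₀ (pow_pos h0 2)]
      nlinarith [mul_le_mul_of_nonneg_right hτ h0.le]
  have hun : ⟪α • (a + b), n⟫ = 0 := by
    rw [real_inner_smul_left, inner_add_left, hna, hnb, add_zero, mul_zero]
  obtain ⟨β, hβ⟩ := exists_norm_add_smul_eq hn hun hα.2
  refine ⟨α • (a + b) + β • n, hβ, ?_, ?_⟩
  · rw [inner_add_left, real_inner_smul_left, real_inner_smul_left,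
      inner_add_left_eq_half_norm_sq hab, real_inner_comm a n, hna, hα.1, mul_zero, add_zero]
  · have hb : ⟪a + b, b⟫ = ‖a + b‖ ^ 2 / 2 := by
      rw [add_comm, inner_add_left_eq_half_norm_sq hab.symm, add_comm]
    rw [inner_add_left, real_inner_smul_left, real_inner_smul_left, hb, real_inner_comm b n, hnb,
      hα.1, mul_zero, add_zero]

variable {r : ℝ}

theorem norm_add_eq_sqrt_of_norm_sub_eq_one {p q : E} (hp : ‖p‖ = r) (hq : ‖q‖ = r)
    (h : ‖q - p‖ = 1) : ‖q + p‖ = √(4 * r ^ 2 - 1) := by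
  have := parallelogram_law_with_norm ℝ q p
  rw [hp, hq, h] at this
  rw [← Real.sqrt_sq (norm_nonneg _)]
  congr 1
  linarith

theorem exists_norm_sub_eq_one_of_norm_sub_le_sqrt (hE : 3 ≤ finrank ℝ E) (hr : 1 / 2 ≤ r)
    (hr1 : r ≤ 1) {a b : E} (ha : ‖a‖ = r) (hb : ‖b‖ = r) (hab : ‖a - b‖ ≤ √(4 * r ^ 2 - 1)) :
    ∃ q : E, ‖q‖ = r ∧ ‖q - a‖ = 1 ∧ ‖q - b‖ = 1 := by
  have hab' : 1 ≤ ‖a + b‖ := by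
    have hpar := parallelogram_law_with_norm ℝ a b
    have := (Real.le_sqrt (norm_nonneg _) (by nlinarith)).1 hab
    rw [ha, hb] at hpar
    nlinarith [norm_nonneg (a + b)]
  have hτ : 2 * |r ^ 2 - 1 / 2| ≤ r * ‖a + b‖ :=
    calc 2 * |r ^ 2 - 1 / 2| = |2 * r ^ 2 - 1| := by rw [← abs_two, ← abs_mul]; ring_nf
      _ ≤ r := abs_le.mpr ⟨by nlinarith, by nlinarith⟩
      _ ≤ r * ‖a + b‖ := le_mul_of_one_le_right (by linarith) hab'
  obtain ⟨q, hq, hqa, hqb⟩ :=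
    exists_norm_eq_inner_eq_inner_eq hE (ha.trans hb.symm) (by linarith) hτ
  have hdist : ∀ p : E, ‖p‖ = r → ⟪q, p⟫ = r ^ 2 - 1 / 2 → ‖q - p‖ = 1 := fun p hp hqp => by
    rw [← Real.sqrt_sq (norm_nonneg _), norm_sub_sq_real, hq, hp, hqp]
    convert Real.sqrt_one using 2
    ring
  exact ⟨q, hq, hdist a ha hqa, hdist b hb hqb⟩

end

namespace SimpleGraph

variable {V : Type*} {G : SimpleGraph V}

theorem Reachable.iff_of_forall_adj {p : V → Prop} (hp : ∀ u v, G.Adj u v → (p u ↔ p v))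
    {u v : V} (h : G.Reachable u v) : p u ↔ p v := by
  obtain ⟨w⟩ := h
  induction w with
  | nil => rfl
  | cons huv _ ih => exact (hp _ _ huv).trans ih

theorem Preconnected.eq_or_eq_swap_of_fin_two {c₁ c₂ : V → Fin 2} (hG : G.Preconnected)
    (h₁ : ∀ u v, G.Adj u v → c₁ u ≠ c₁ v) (h₂ : ∀ u v, G.Adj u v → c₂ u ≠ c₂ v) :
    c₁ = c₂ ∨ c₁ = Equiv.swap (0 : Fin 2) 1 ∘ c₂ := by
  rcases isEmpty_or_nonempty V with hV | ⟨⟨v₀⟩⟩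
  · exact Or.inl (funext hV.elim)
  have hflip : ∀ a a' b b' : Fin 2, a ≠ a' → b ≠ b' → (a = b ↔ a' = b') := by decide
  have hagree : ∀ v, c₁ v₀ = c₂ v₀ ↔ c₁ v = c₂ v := fun v =>
    (hG v₀ v).iff_of_forall_adj fun u w huw => hflip _ _ _ _ (h₁ u w huw) (h₂ u w huw)
  by_cases h₀ : c₁ v₀ = c₂ v₀
  · exact Or.inl (funext fun v => (hagree v).1 h₀)
  · have hswap : ∀ a b : Fin 2, a ≠ b → a = Equiv.swap 0 1 b := by decide
    exact Or.inr (funext fun v => hswap _ _ (mt (hagree v).2 h₀))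

end SimpleGraph

section UnitDistanceGraph

variable {E : Type*} [NormedAddCommGroup E] {r : ℝ}

def unitDistanceGraph (S : Set E) : SimpleGraph S :=
  SimpleGraph.fromRel fun u v => ‖(u : E) - v‖ = 1

theorem unitDistanceGraph_adj_of_norm_sub_eq_one {S : Set E} {u v : S} (h : ‖(u : E) - v‖ = 1) :
    (unitDistanceGraph S).Adj u v := by
  refine SimpleGraph.fromRel_adj _ u v |>.2 ⟨?_, Or.inl h⟩
  rintro rfl
  simp at h

theorem unitDistanceGraph_reachable_of_norm_sub_le_sqrt [InnerProductSpace ℝ E]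
    (hE : 3 ≤ finrank ℝ E) (hr : 1 / 2 ≤ r) (hr1 : r ≤ 1) {S : Set E} {c v : S}
    (hS : ∀ q : E, ‖q‖ = r → ‖q + c‖ = √(4 * r ^ 2 - 1) → q ∈ S)
    (hc : ‖(c : E)‖ = r) (hv : ‖(v : E)‖ = r) (hcv : ‖(v : E) - c‖ ≤ √(4 * r ^ 2 - 1)) :
    (unitDistanceGraph S).Reachable c v := by
  obtain ⟨q, hq, hqv, hqc⟩ := exists_norm_sub_eq_one_of_norm_sub_le_sqrt hE hr hr1 hv hc hcv
  let q' : S := ⟨q, hS q hq (norm_add_eq_sqrt_of_norm_sub_eq_one hc hq hqc)⟩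
  have hcq : (unitDistanceGraph S).Adj c q' :=
    unitDistanceGraph_adj_of_norm_sub_eq_one (by rw [norm_sub_rev]; exact hqc)
  exact hcq.reachable.trans (unitDistanceGraph_adj_of_norm_sub_eq_one hqv).reachable

end UnitDistanceGraph

theorem stmt_11 (r : ℝ) (hr : 1/2 < r) (hr' : r < Real.sqrt 3 / 3)
    (x : EuclideanSpace ℝ (Fin 3)) (hx : ‖x‖ = r) :
    let ρ := Real.sqrt (4 * r ^ 2 - 1)
    let V := {p : EuclideanSpace ℝ (Fin 3) //
      ‖p‖ = r ∧ (‖p - x‖ ≤ ρ ∨ ‖p - (-x)‖ ≤ ρ)}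
    let G : SimpleGraph V := SimpleGraph.fromRel (fun u v => ‖(u : EuclideanSpace ℝ (Fin 3)) - v‖ = 1)
    G.Connected ∧
    ∀ c₁ c₂ : V → Fin 2,
      (∀ u v, G.Adj u v → c₁ u ≠ c₁ v) →
      (∀ u v, G.Adj u v → c₂ u ≠ c₂ v) →
      c₁ = c₂ ∨ c₁ = (Equiv.swap (0 : Fin 2) 1) ∘ c₂ := by
  intro ρ V G
  have hr1 : r ≤ 1 :=
    hr'.le.trans (by nlinarith [Real.sq_sqrt (show (0 : ℝ) ≤ 3 by norm_num), Real.sqrt_nonneg 3])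
  have hE : 3 ≤ finrank ℝ (EuclideanSpace ℝ (Fin 3)) := by simp
  let S : Set (EuclideanSpace ℝ (Fin 3)) := {p | ‖p‖ = r ∧ (‖p - x‖ ≤ ρ ∨ ‖p - -x‖ ≤ ρ)}
  have hρ : 0 ≤ ρ := Real.sqrt_nonneg _
  let x₀ : S := ⟨x, hx, Or.inl (by simpa using hρ)⟩
  let x₁ : S := ⟨-x, (norm_neg x).trans hx, Or.inr (by simpa using hρ)⟩
  have reach₀ (v : S) (hv : ‖(v : EuclideanSpace ℝ (Fin 3)) - x‖ ≤ ρ) :=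
    unitDistanceGraph_reachable_of_norm_sub_le_sqrt hE hr.le hr1 (S := S) (c := x₀)
      (fun q hq h => ⟨hq, Or.inr (by rw [sub_neg_eq_add, h])⟩) hx v.2.1 hv
  have reach₁ (v : S) (hv : ‖(v : EuclideanSpace ℝ (Fin 3)) - -x‖ ≤ ρ) :=
    unitDistanceGraph_reachable_of_norm_sub_le_sqrt hE hr.le hr1 (S := S) (c := x₁)
      (fun q hq h => ⟨hq, Or.inl (by rw [sub_eq_add_neg, h])⟩) x₁.2.1 v.2.1 hv
  have hx₀x₁ : (unitDistanceGraph S).Reachable x₀ x₁ := by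
    obtain ⟨q, hq, hqx, -⟩ :=
      exists_norm_sub_eq_one_of_norm_sub_le_sqrt hE hr.le hr1 hx hx (by simp)
    have hqx' : ‖q - -x‖ = ρ := by
      rw [sub_neg_eq_add, norm_add_eq_sqrt_of_norm_sub_eq_one hx hq hqx]
    let q' : S := ⟨q, hq, Or.inr hqx'.le⟩
    exact (unitDistanceGraph_adj_of_norm_sub_eq_one (u := x₀) (v := q')
      (by rw [norm_sub_rev]; exact hqx)).reachable.trans (reach₁ q' hqx'.le).symm
  have hconn : (unitDistanceGraph S).Connected :=
    (SimpleGraph.connected_iff_exists_forall_reachable _).2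
      ⟨x₀, fun v => v.2.2.elim (reach₀ v) fun hv => hx₀x₁.trans (reach₁ v hv)⟩
  exact ⟨hconn, fun _ _ => hconn.preconnected.eq_or_eq_swap_of_fin_two⟩
end

section
/- For 1/2 < r ≤ √(3−√3)/2, the sphere S²(r) admits a proper 4-coloring with respect to unit distance: there exists c : S²(r) → Fin 4 such that ‖x − y‖ = 1 implies c(x) ≠ c(y). (Partition the sphere into four congruent spherical triangles, each of diameter < 1.) -/
set_option maxHeartbeats 4000000


lemma tri (x y z : ℝ) (h1 : 0 < x+y) (h2 : 0 ≤ y+z) (h3 : 0 ≤ z+x) :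
    (0 ≤ x ∧ 0 ≤ y ∧ 0 ≤ z) ∨ (x < 0 ∧ 0 ≤ y ∧ 0 ≤ z) ∨
    (y < 0 ∧ 0 ≤ x ∧ 0 ≤ z) ∨ (z < 0 ∧ 0 ≤ x ∧ 0 ≤ y) := by
  rcases le_or_gt 0 x with hx|hx <;> rcases le_or_gt 0 y with hy|hy <;>
    rcases le_or_gt 0 z with hz|hz <;>
  first
    | exact Or.inl ⟨hx,hy,hz⟩
    | exact Or.inr (Or.inl ⟨hx,hy,hz⟩)
    | exact Or.inr (Or.inr (Or.inl ⟨hy,hx,hz⟩))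
    | exact Or.inr (Or.inr (Or.inr ⟨hz,hx,hy⟩))
    | linarith

lemma single (t R Z q : ℝ) (ht : t^2 = 3) (ht0 : 0 < t) (hR : 0 < R)
    (hq : 0 < q) (hZR : Z ≤ R) (h3q : 3*q^2 ≤ R^2)
    (hstrict : Z < R ∨ 3*q^2 < R^2) : 3*(Z*q) < t*R^2 := by
  have htq : t*q ≤ R := by nlinarith [mul_pos ht0 hq]
  rcases hstrict with hs | hs
  · nlinarith [mul_pos (sub_pos.2 hs) hq, mul_nonneg (sub_nonneg.2 htq) (mul_pos ht0 hR).le]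
  · have htq' : t*q < R := by nlinarith [mul_pos ht0 hq]
    nlinarith [mul_pos (sub_pos.2 htq') (mul_pos ht0 hR), mul_nonneg (sub_nonneg.2 hZR) hq.le]

lemma mixed (t R p q Y A : ℝ) (ht : t^2 = 3) (ht0 : 0 < t) (hR : 0 < R)
    (hp : 0 < p) (hq : 0 < q) (hY : p ≤ Y) (hA : q ≤ A)
    (h1 : 2*p^2 + Y^2 ≤ R^2) (h2 : A^2 + 2*q^2 ≤ R^2) :
    3*(p*A + Y*q - p*q) < t*R^2 := by
  have hR2 : 0 < R^2 := by positivity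
  rcases le_or_gt (p*A + Y*q - p*q) 0 with hS | hS
  · nlinarith [mul_pos ht0 hR2]
  · have hG : 3*(p*A + Y*q - p*q)^2 < (2*p^2 + Y^2)*(A^2 + 2*q^2) := by
      nlinarith [sq_nonneg ((Y-p)*(A-q) - p*q), mul_pos (mul_pos hp hq) (mul_pos hp hq),
        mul_nonneg (mul_nonneg hq.le (sq_nonneg (Y-p))) (sub_nonneg.2 hA),
        mul_nonneg (mul_nonneg hp.le (sub_nonneg.2 hY)) (sq_nonneg (A-q))]
    have hRR : (2*p^2 + Y^2)*(A^2 + 2*q^2) ≤ R^2 * R^2 := by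
      have hpos2 : (0:ℝ) ≤ A^2 + 2*q^2 := by positivity
      exact mul_le_mul h1 h2 hpos2 hR2.le
    have h3S : 3*(p*A + Y*q - p*q)^2 < R^2 * R^2 := lt_of_lt_of_le hG hRR
    have htS : t*(p*A + Y*q - p*q) < R^2 := by
      nlinarith [mul_pos ht0 hS]
    nlinarith [mul_lt_mul_of_pos_left htS ht0]

lemma key (t R x y z a b c : ℝ) (ht : t^2 = 3) (ht0 : 0 < t) (hR : 0 < R)
    (hu : x^2 + y^2 + z^2 = R^2) (hw : a^2 + b^2 + c^2 = R^2)
    (h1 : 0 < x + y) (h2 : 0 ≤ y + z) (h3 : 0 ≤ z + x)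
    (h4 : 0 < a + b) (h5 : 0 ≤ b + c) (h6 : 0 ≤ c + a) :
    -(t * R^2) < 3 * (x*a + y*b + z*c) := by
  have hR2 : 0 < R^2 := by positivity
  have htR : 0 < t * R^2 := by positivity
  rcases tri x y z h1 h2 h3 with ⟨hx,hy,hz⟩|⟨hx,hy,hz⟩|⟨hy,hx,hz⟩|⟨hz,hx,hy⟩ <;>
    rcases tri a b c h4 h5 h6 with ⟨ha,hb,hc⟩|⟨ha,hb,hc⟩|⟨hb,ha,hc⟩|⟨hc,ha,hb⟩
  -- case uAll wAll
  · nlinarith [mul_nonneg hx ha, mul_nonneg hy hb, mul_nonneg hz hc]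
  -- uAll, a<0
  · have hxR : x ≤ R := by nlinarith
    have h3q : 3*(-a)^2 < R^2 := by nlinarith
    have := single t R x (-a) ht ht0 hR (by linarith) hxR h3q.le (Or.inr h3q)
    nlinarith [mul_nonneg hy hb, mul_nonneg hz hc]
  -- uAll, b<0
  · have hyR : y ≤ R := by nlinarith
    have h3q : 3*(-b)^2 < R^2 := by nlinarith
    have := single t R y (-b) ht ht0 hR (by linarith) hyR h3q.le (Or.inr h3q)
    nlinarith [mul_nonneg hx ha, mul_nonneg hz hc]
  -- uAll, c<0
  · have hxy : 0 < x^2 + y^2 := by nlinarith [mul_pos h1 h1, sq_nonneg (x-y)]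
    have hz2 : z^2 < R^2 := by nlinarith
    have hzR : z < R := by
      by_contra hcon
      push_neg at hcon
      nlinarith [mul_le_mul hcon hcon hR.le hz]
    have h3q : 3*(-c)^2 ≤ R^2 := by nlinarith
    have := single t R z (-c) ht ht0 hR (by linarith) hzR.le h3q (Or.inl hzR)
    nlinarith [mul_nonneg hx ha, mul_nonneg hy hb]
  -- x<0, wAll
  · have haR : a ≤ R := by nlinarith
    have h3q : 3*(-x)^2 < R^2 := by nlinarith
    have := single t R a (-x) ht ht0 hR (by linarith) haR h3q.le (Or.inr h3q)
    nlinarith [mul_nonneg hy hb, mul_nonneg hz hc]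
  -- x<0, a<0 : aligned
  · nlinarith [mul_pos (neg_pos.2 hx) (neg_pos.2 ha),
      mul_nonneg hy hb, mul_nonneg hz hc]
  -- x<0, b<0 : mixed, p=-x, q=-b, Y=y, A=a, aligned product z*c ≥ p*q
  · have hnx : (0:ℝ) < -x := by linarith
    have hnb : (0:ℝ) < -b := by linarith
    have hzc : (-x)*(-b) ≤ z*c := by
      nlinarith [mul_nonneg h3 h5, mul_nonneg h3 hnb.le, mul_nonneg hnx.le h5]
    have hu2 : 2*(-x)^2 + y^2 ≤ R^2 := by
      nlinarith [mul_nonneg h3 (show (0:ℝ) ≤ z - x by linarith)]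
    have hw2 : a^2 + 2*(-b)^2 ≤ R^2 := by
      nlinarith [mul_nonneg h5 (show (0:ℝ) ≤ c - b by linarith)]
    have hm := mixed t R (-x) (-b) y a ht ht0 hR hnx hnb (by linarith) (by linarith) hu2 hw2
    linarith [hzc, hm]
  -- x<0, c<0 : mixed, p=-x, q=-c, Y=z, A=a, aligned y*b ≥ p*q
  · have hnx : (0:ℝ) < -x := by linarith
    have hnc : (0:ℝ) < -c := by linarith
    have hyb : (-x)*(-c) ≤ y*b := by
      nlinarith [mul_nonneg h1.le h5, mul_nonneg h1.le hnc.le, mul_nonneg hnx.le h5]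
    have hu2 : 2*(-x)^2 + z^2 ≤ R^2 := by
      nlinarith [mul_nonneg h1.le (show (0:ℝ) ≤ y - x by linarith)]
    have hw2 : a^2 + 2*(-c)^2 ≤ R^2 := by
      nlinarith [mul_nonneg h5 (show (0:ℝ) ≤ b - c by linarith)]
    have hm := mixed t R (-x) (-c) z a ht ht0 hR hnx hnc (by linarith) (by linarith) hu2 hw2
    linarith [hyb, hm]
  -- y<0, wAll
  · have hbR : b ≤ R := by nlinarith
    have h3q : 3*(-y)^2 < R^2 := by nlinarith
    have := single t R b (-y) ht ht0 hR (by linarith) hbR h3q.le (Or.inr h3q)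
    nlinarith [mul_nonneg hx ha, mul_nonneg hz hc]
  -- y<0, a<0 : mixed, p=-y, q=-a, Y=x, A=b, aligned z*c ≥ p*q
  · have hny : (0:ℝ) < -y := by linarith
    have hna : (0:ℝ) < -a := by linarith
    have hzc : (-y)*(-a) ≤ z*c := by
      nlinarith [mul_nonneg h2 h6, mul_nonneg h2 hna.le, mul_nonneg hny.le h6]
    have hu2 : 2*(-y)^2 + x^2 ≤ R^2 := by
      nlinarith [mul_nonneg h2 (show (0:ℝ) ≤ z - y by linarith)]
    have hw2 : b^2 + 2*(-a)^2 ≤ R^2 := by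
      nlinarith [mul_nonneg h6 (show (0:ℝ) ≤ c - a by linarith)]
    have hm := mixed t R (-y) (-a) x b ht ht0 hR hny hna (by linarith) (by linarith) hu2 hw2
    linarith [hzc, hm]
  -- y<0, b<0 : aligned
  · nlinarith [mul_pos (neg_pos.2 hy) (neg_pos.2 hb),
      mul_nonneg hx ha, mul_nonneg hz hc]
  -- y<0, c<0 : mixed, p=-y, q=-c, Y=z, A=b, aligned x*a ≥ p*q
  · have hny : (0:ℝ) < -y := by linarith
    have hnc : (0:ℝ) < -c := by linarith
    have hxa : (-y)*(-c) ≤ x*a := by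
      nlinarith [mul_nonneg h1.le h6, mul_nonneg h1.le hnc.le, mul_nonneg hny.le h6]
    have hu2 : 2*(-y)^2 + z^2 ≤ R^2 := by
      nlinarith [mul_nonneg h1.le (show (0:ℝ) ≤ x - y by linarith)]
    have hw2 : b^2 + 2*(-c)^2 ≤ R^2 := by
      nlinarith [mul_nonneg h6 (show (0:ℝ) ≤ a - c by linarith)]
    have hm := mixed t R (-y) (-c) z b ht ht0 hR hny hnc (by linarith) (by linarith) hu2 hw2
    linarith [hxa, hm]
  -- z<0, wAll
  · have hab : 0 < a^2 + b^2 := by nlinarith [mul_pos h4 h4, sq_nonneg (a-b)]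
    have hc2 : c^2 < R^2 := by nlinarith
    have hcR : c < R := by
      by_contra hcon
      push_neg at hcon
      nlinarith [mul_le_mul hcon hcon hR.le hc]
    have h3q : 3*(-z)^2 ≤ R^2 := by nlinarith
    have := single t R c (-z) ht ht0 hR (by linarith) hcR.le h3q (Or.inl hcR)
    nlinarith [mul_nonneg hx ha, mul_nonneg hy hb]
  -- z<0, a<0 : mixed, p=-z, q=-a, Y=y, A=c, aligned y*b? no: aligned product with common index: u big coords x,y ; w big coords b,c ; common: y*b
  · have hnz : (0:ℝ) < -z := by linarith
    have hna : (0:ℝ) < -a := by linarith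
    have hyb : (-z)*(-a) ≤ y*b := by
      nlinarith [mul_nonneg h2 h4.le, mul_nonneg h2 hna.le, mul_nonneg hnz.le h4.le]
    have hu2 : 2*(-z)^2 + x^2 ≤ R^2 := by
      nlinarith [mul_nonneg h2 (show (0:ℝ) ≤ y - z by linarith)]
    have hw2 : c^2 + 2*(-a)^2 ≤ R^2 := by
      nlinarith [mul_nonneg h4.le (show (0:ℝ) ≤ b - a by linarith)]
    have hm := mixed t R (-z) (-a) x c ht ht0 hR hnz hna (by linarith) (by linarith) hu2 hw2
    linarith [hyb, hm]
  -- z<0, b<0 : mixed, p=-z, q=-b, Y=y, A=c, aligned x*a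
  · have hnz : (0:ℝ) < -z := by linarith
    have hnb : (0:ℝ) < -b := by linarith
    have hxa : (-z)*(-b) ≤ x*a := by
      nlinarith [mul_nonneg h3 h4.le, mul_nonneg h3 hnb.le, mul_nonneg hnz.le h4.le]
    have hu2 : 2*(-z)^2 + y^2 ≤ R^2 := by
      nlinarith [mul_nonneg h3 (show (0:ℝ) ≤ x - z by linarith)]
    have hw2 : c^2 + 2*(-b)^2 ≤ R^2 := by
      nlinarith [mul_nonneg h4.le (show (0:ℝ) ≤ a - b by linarith)]
    have hm := mixed t R (-z) (-b) y c ht ht0 hR hnz hnb (by linarith) (by linarith) hu2 hw2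
    linarith [hxa, hm]
  -- z<0, c<0 : aligned
  · nlinarith [mul_pos (neg_pos.2 hz) (neg_pos.2 hc),
      mul_nonneg hx ha, mul_nonneg hy hb]


lemma cover (x y z : ℝ) (hne : ¬(x = 0 ∧ y = 0 ∧ z = 0))
    (h0 : ¬(0 < x + y ∧ 0 ≤ y + z ∧ 0 ≤ z + x))
    (h1 : ¬(0 < x - y ∧ y + z ≤ 0 ∧ z ≤ x))
    (h2 : ¬(z + x < 0 ∧ x ≤ y ∧ z ≤ y)) :
    0 < z - x ∧ x + y ≤ 0 ∧ y ≤ z := by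
  push_neg at h0 h1 h2
  have hxy : x + y ≤ 0 := by
    by_contra hc
    push_neg at hc
    rcases le_or_gt 0 (y + z) with h | h
    · have hzx := h0 hc h
      rcases le_or_gt x y with hxy' | hxy'
      · have := h2 hzx hxy'
        linarith
      · linarith
    · rcases le_or_gt x y with hxy' | hxy'
      · rcases le_or_gt 0 (z + x) with hzx | hzx
        · linarith
        · have := h2 hzx hxy'
          linarith
      · have := h1 (by linarith) (by linarith)
        linarith
  have hyz : y ≤ z := by
    by_contra hc
    push_neg at hc
    rcases le_or_gt 0 (z + x) with hzx | hzx
    · linarith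
    · rcases le_or_gt x y with hxy' | hxy'
      · have := h2 hzx hxy'
        linarith
      · have := h1 (by linarith) (by linarith)
        linarith
  refine ⟨?_, hxy, hyz⟩
  by_contra hc
  push_neg at hc
  rcases le_or_gt (y + z) 0 with h | h
  · rcases lt_or_ge y x with hxy' | hxy'
    · have := h1 (by linarith) h
      linarith
    · have hxz : x = y := le_antisymm hxy' (by linarith)
      rcases lt_or_eq_of_le (show x ≤ 0 by linarith) with hs | hs
      · have := h2 (by linarith) (le_of_eq hxz)
        linarith
      · exact hne ⟨by linarith, by linarith, by linarith⟩
  · linarith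


noncomputable def col (v : EuclideanSpace ℝ (Fin 3)) : Fin 4 :=
  if 0 < v 0 + v 1 ∧ 0 ≤ v 1 + v 2 ∧ 0 ≤ v 2 + v 0 then 0
  else if 0 < v 0 - v 1 ∧ v 1 + v 2 ≤ 0 ∧ v 2 ≤ v 0 then 1
  else if v 2 + v 0 < 0 ∧ v 0 ≤ v 1 ∧ v 2 ≤ v 1 then 2
  else 3

lemma col0 (v : EuclideanSpace ℝ (Fin 3)) (h : col v = 0) :
    0 < v 0 + v 1 ∧ 0 ≤ v 1 + v 2 ∧ 0 ≤ v 2 + v 0 := by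
  unfold col at h; split_ifs at h with h0 h1 h2
  · exact h0
  all_goals exact absurd h (by decide)

lemma col1 (v : EuclideanSpace ℝ (Fin 3)) (h : col v = 1) :
    0 < v 0 - v 1 ∧ v 1 + v 2 ≤ 0 ∧ v 2 ≤ v 0 := by
  unfold col at h; split_ifs at h with h0 h1 h2
  all_goals first | assumption | exact absurd h (by decide)

lemma col2 (v : EuclideanSpace ℝ (Fin 3)) (h : col v = 2) :
    v 2 + v 0 < 0 ∧ v 0 ≤ v 1 ∧ v 2 ≤ v 1 := by
  unfold col at h; split_ifs at h with h0 h1 h2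
  all_goals first | assumption | exact absurd h (by decide)

lemma col3 (v : EuclideanSpace ℝ (Fin 3)) (h : col v = 3) :
    ¬(0 < v 0 + v 1 ∧ 0 ≤ v 1 + v 2 ∧ 0 ≤ v 2 + v 0) ∧
    ¬(0 < v 0 - v 1 ∧ v 1 + v 2 ≤ 0 ∧ v 2 ≤ v 0) ∧
    ¬(v 2 + v 0 < 0 ∧ v 0 ≤ v 1 ∧ v 2 ≤ v 1) := by
  unfold col at h; split_ifs at h with h0 h1 h2
  · exact absurd h (by decide)
  · exact absurd h (by decide)
  · exact absurd h (by decide)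
  · exact ⟨h0, h1, h2⟩





lemma finalc (t r x0 x1 x2 y0 y1 y2 : ℝ) (ht : t^2 = 3) (ht0 : 0 < t)
    (hr2 : r^2 ≤ (3 - t)/4)
    (hx2 : x0^2 + x1^2 + x2^2 = r^2) (hy2 : y0^2 + y1^2 + y2^2 = r^2)
    (hd : (x0-y0)^2 + (x1-y1)^2 + (x2-y2)^2 = 1)
    (hkey : -(t*r^2) < 3*(x0*y0 + x1*y1 + x2*y2)) : False := by
  nlinarith [mul_le_mul_of_nonneg_left hr2 ht0.le]

lemma sphere_coords (r : ℝ) (v : EuclideanSpace ℝ (Fin 3))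
    (hv : v ∈ Metric.sphere (0 : EuclideanSpace ℝ (Fin 3)) r) :
    (v 0)^2 + (v 1)^2 + (v 2)^2 = r^2 := by
  have h : ‖v‖ = r := by simpa using mem_sphere_zero_iff_norm.1 hv
  rw [EuclideanSpace.norm_eq] at h
  simp only [Real.norm_eq_abs, sq_abs, Fin.sum_univ_three] at h
  have h0 : (0:ℝ) ≤ (v 0)^2 + (v 1)^2 + (v 2)^2 := by positivity
  rw [← h, Real.sq_sqrt h0]

theorem stmt_17 (r : ℝ) (hr : 1/2 < r) (hr' : r ≤ Real.sqrt (3 - Real.sqrt 3) / 2) :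
    ∃ c : EuclideanSpace ℝ (Fin 3) → Fin 4,
      ∀ x ∈ Metric.sphere (0 : EuclideanSpace ℝ (Fin 3)) r,
      ∀ y ∈ Metric.sphere (0 : EuclideanSpace ℝ (Fin 3)) r,
        dist x y = 1 → c x ≠ c y := by
  set t := Real.sqrt 3 with htdef
  have ht : t^2 = 3 := Real.sq_sqrt (by norm_num)
  have ht0 : 0 < t := Real.sqrt_pos.2 (by norm_num)
  have hr0 : (0:ℝ) < r := lt_trans (by norm_num) hr
  have h3t : (0:ℝ) ≤ 3 - t := by nlinarith [sq_nonneg (t - 3)]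
  have hr2 : r^2 ≤ (3 - t)/4 := by
    have hs : Real.sqrt (3 - t)^2 = 3 - t := Real.sq_sqrt h3t
    nlinarith [Real.sqrt_nonneg (3 - t), hr']
  refine ⟨col, ?_⟩
  intro x hx y hy hd hcc
  have hx2 := sphere_coords r x hx
  have hy2 := sphere_coords r y hy
  -- squared distance
  have hd2 : (x 0 - y 0)^2 + (x 1 - y 1)^2 + (x 2 - y 2)^2 = 1 := by
    rw [EuclideanSpace.dist_eq] at hd
    simp only [Real.dist_eq, sq_abs, Fin.sum_univ_three] at hd
    have h0 : (0:ℝ) ≤ (x 0 - y 0)^2 + (x 1 - y 1)^2 + (x 2 - y 2)^2 := by positivity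
    have hs := Real.sq_sqrt h0
    rw [hd] at hs
    linarith [hs]
  have hnex : ¬(x 0 = 0 ∧ x 1 = 0 ∧ x 2 = 0) := by
    rintro ⟨e0, e1, e2⟩
    rw [e0, e1, e2] at hx2
    nlinarith
  have hney : ¬(y 0 = 0 ∧ y 1 = 0 ∧ y 2 = 0) := by
    rintro ⟨e0, e1, e2⟩
    rw [e0, e1, e2] at hy2
    nlinarith
  rcases (by decide : ∀ i : Fin 4, i = 0 ∨ i = 1 ∨ i = 2 ∨ i = 3) (col x) with h|h|h|h
  · obtain ⟨a1, a2, a3⟩ := col0 x h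
    obtain ⟨b1, b2, b3⟩ := col0 y (hcc ▸ h)
    have hk := key t r (x 0) (x 1) (x 2) (y 0) (y 1) (y 2) ht ht0 hr0 hx2 hy2
      a1 a2 a3 b1 b2 b3
    exact finalc t r (x 0) (x 1) (x 2) (y 0) (y 1) (y 2) ht ht0 hr2 hx2 hy2 hd2
      (by linarith)
  · obtain ⟨a1, a2, a3⟩ := col1 x h
    obtain ⟨b1, b2, b3⟩ := col1 y (hcc ▸ h)
    have hk := key t r (x 0) (-(x 1)) (-(x 2)) (y 0) (-(y 1)) (-(y 2)) ht ht0 hr0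
      (by linear_combination hx2) (by linear_combination hy2)
      (by linarith) (by linarith) (by linarith) (by linarith) (by linarith) (by linarith)
    exact finalc t r (x 0) (x 1) (x 2) (y 0) (y 1) (y 2) ht ht0 hr2 hx2 hy2 hd2
      (by nlinarith [hk])
  · obtain ⟨a1, a2, a3⟩ := col2 x h
    obtain ⟨b1, b2, b3⟩ := col2 y (hcc ▸ h)
    have hk := key t r (-(x 2)) (-(x 0)) (x 1) (-(y 2)) (-(y 0)) (y 1) ht ht0 hr0
      (by linear_combination hx2) (by linear_combination hy2)
      (by linarith) (by linarith) (by linarith) (by linarith) (by linarith) (by linarith)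
    exact finalc t r (x 0) (x 1) (x 2) (y 0) (y 1) (y 2) ht ht0 hr2 hx2 hy2 hd2
      (by nlinarith [hk])
  · obtain ⟨nx0, nx1, nx2⟩ := col3 x h
    obtain ⟨ny0, ny1, ny2⟩ := col3 y (hcc ▸ h)
    obtain ⟨a1, a2, a3⟩ := cover (x 0) (x 1) (x 2) hnex nx0 nx1 nx2
    obtain ⟨b1, b2, b3⟩ := cover (y 0) (y 1) (y 2) hney ny0 ny1 ny2
    have hk := key t r (x 2) (-(x 0)) (-(x 1)) (y 2) (-(y 0)) (-(y 1)) ht ht0 hr0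
      (by linear_combination hx2) (by linear_combination hy2)
      (by linarith) (by linarith) (by linarith) (by linarith) (by linarith) (by linarith)
    exact finalc t r (x 0) (x 1) (x 2) (y 0) (y 1) (y 2) ht ht0 hr2 hx2 hy2 hd2
      (by nlinarith [hk])
end
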